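/- Let t ≥ 2 and ℓ ≥ 1 be integers. There exists n₀ such that for all n ≥ n₀, if G is an extremal graph with respect to spex(n, tC_{2ℓ+1}), then ρ(G) ≥ n/2 + (t−1) − t²/(2n). -/

import Mathlib

open SimpleGraph
open scoped Classical

/-- The largest real eigenvalue of the adjacency matrix of `G`
(the spectral radius of a graph). -/
noncomputable def specRad {V : Type} [Fintype V] (G : SimpleGraph V) : ℝ :=
  sSup {μ : ℝ | ∃ x : V → ℝ, x ≠ 0 ∧ (G.adjMatrix ℝ).mulVec x = μ • x}

/-- `G` contains a (not necessarily induced) copy of `F` as a subgraph. -/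
def ContainsCopy {α β : Type} (F : SimpleGraph α) (G : SimpleGraph β) : Prop :=
  ∃ f : α → β, Function.Injective f ∧ ∀ a b, F.Adj a b → G.Adj (f a) (f b)

/-- The Turán number `ex(n, F)`. -/
noncomputable def exNum {α : Type} (n : ℕ) (F : SimpleGraph α) : ℕ :=
  sSup {m : ℕ | ∃ G : SimpleGraph (Fin n), ¬ ContainsCopy F G ∧ G.edgeSet.ncard = m}

/-- The spectral Turán number `spex(n, F)`. -/
noncomputable def spex {α : Type} (n : ℕ) (F : SimpleGraph α) : ℝ :=
  sSup {r : ℝ | ∃ G : SimpleGraph (Fin n), ¬ ContainsCopy F G ∧ specRad G = r}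

/-- `t` vertex-disjoint copies of `F`. -/
def copies {α : Type} (t : ℕ) (F : SimpleGraph α) : SimpleGraph (Fin t × α) where
  Adj x y := x.1 = y.1 ∧ F.Adj x.2 y.2
  symm := by constructor; intro _ _ h; exact ⟨h.1.symm, h.2.symm⟩
  loopless := by constructor; intro x h; exact F.irrefl h.2

/-- The join `G + H` of two graphs. -/
def joinG {α β : Type} (G : SimpleGraph α) (H : SimpleGraph β) : SimpleGraph (α ⊕ β) where
  Adj x y := match x, y with
    | Sum.inl a, Sum.inl b => G.Adj a b
    | Sum.inr a, Sum.inr b => H.Adj a b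
    | Sum.inl _, Sum.inr _ => True
    | Sum.inr _, Sum.inl _ => True
  symm := by
    constructor
    rintro (a|a) (b|b) h
    · exact G.adj_symm h
    · trivial
    · trivial
    · exact H.adj_symm h
  loopless := by
    constructor
    rintro (a|a) h
    · exact G.irrefl h
    · exact H.irrefl h

/-- `S_{n,ℓ}^{+}`: the join of `K_ℓ` with an independent set of `n - ℓ` vertices,
plus one edge inside the independent set. -/
def sPlus (n ℓ : ℕ) : SimpleGraph (Fin n) :=
  SimpleGraph.fromRel (fun i j => (i : ℕ) < ℓ ∨ ((i : ℕ) ≤ ℓ + 1 ∧ (j : ℕ) ≤ ℓ + 1))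

/-- `S_{n,ℓ}^{++}`: the join of `K_ℓ` with an independent set of `n - ℓ` vertices,
plus a maximum matching inside the independent set. -/
def sPP (n ℓ : ℕ) : SimpleGraph (Fin n) :=
  SimpleGraph.fromRel (fun i j => (i : ℕ) < ℓ ∨ ((i : ℕ) - ℓ) / 2 = ((j : ℕ) - ℓ) / 2)

/-- The number of edges inside a vertex subset `A`. -/
noncomputable def eIn {n : ℕ} (G : SimpleGraph (Fin n)) (A : Finset (Fin n)) : ℕ :=
  (G.induce (A : Set (Fin n))).edgeSet.ncard

/-- The number of edges between two disjoint vertex subsets `A` and `B`. -/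
noncomputable def eCross {n : ℕ} (G : SimpleGraph (Fin n)) (A B : Finset (Fin n)) : ℕ :=
  Set.ncard {p : Fin n × Fin n | p.1 ∈ A ∧ p.2 ∈ B ∧ G.Adj p.1 p.2}

-- ===================== auxiliary lemmas =====================

open Finset in
lemma evSet_le_aux {n : ℕ} (G : SimpleGraph (Fin n)) :
    ∀ μ ∈ {μ : ℝ | ∃ x : Fin n → ℝ, x ≠ 0 ∧ (G.adjMatrix ℝ).mulVec x = μ • x}, μ ≤ n := by
  rintro μ ⟨x, hx, hAx⟩
  have hne : Nonempty (Fin n) := by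
    by_contra h
    exact hx (funext fun i => absurd ⟨i⟩ h)
  obtain ⟨i, -, hi⟩ := Finset.exists_max_image univ (fun j => |x j|) Finset.univ_nonempty
  obtain ⟨j0, hj0⟩ := Function.ne_iff.mp hx
  have hipos : 0 < |x i| := lt_of_lt_of_le (abs_pos.mpr hj0) (hi j0 (mem_univ j0))
  have hrow : (G.adjMatrix ℝ).mulVec x i = μ * x i := by rw [hAx]; simp
  have habs : |μ| * |x i| ≤ n * |x i| := by
    rw [← abs_mul, ← hrow]
    have h2 : |(G.adjMatrix ℝ).mulVec x i| ≤ ∑ j, |(G.adjMatrix ℝ) i j * x j| := by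
      simpa [Matrix.mulVec, dotProduct] using Finset.abs_sum_le_sum_abs _ _
    refine h2.trans ?_
    have h3 : ∀ j : Fin n, |(G.adjMatrix ℝ) i j * x j| ≤ |x i| := by
      intro j
      rw [abs_mul]
      have h1 : |(G.adjMatrix ℝ) i j| ≤ 1 := by
        by_cases h : G.Adj i j <;> simp [h]
      calc |(G.adjMatrix ℝ) i j| * |x j| ≤ 1 * |x j| :=
            mul_le_mul_of_nonneg_right h1 (abs_nonneg _)
        _ = |x j| := one_mul _
        _ ≤ |x i| := hi j (mem_univ j)
    calc ∑ j, |(G.adjMatrix ℝ) i j * x j| ≤ ∑ _j : Fin n, |x i| :=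
          Finset.sum_le_sum fun j _ => h3 j
      _ = n * |x i| := by simp [mul_comm]
  have : |μ| ≤ n := le_of_mul_le_mul_right habs hipos
  exact (le_abs_self μ).trans this

lemma specRad_le_card {n : ℕ} (G : SimpleGraph (Fin n)) : specRad G ≤ n :=
  Real.sSup_le (evSet_le_aux G) (by positivity)

open Finset in
lemma rayleigh_ones {n : ℕ} (hn : 0 < n) (G : SimpleGraph (Fin n)) :
    (∑ i, ∑ j, (G.adjMatrix ℝ) i j) / n ≤ specRad G := by
  set A := G.adjMatrix ℝ with hA_def
  have hA : A.IsHermitian := by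
    ext i j
    simp [hA_def, Matrix.conjTranspose_apply, SimpleGraph.adjMatrix_apply, SimpleGraph.adj_comm]
  set S := {μ : ℝ | ∃ x : Fin n → ℝ, x ≠ 0 ∧ A.mulVec x = μ • x} with hS_def
  have hbdd : BddAbove S := ⟨n, fun μ hμ => evSet_le_aux G μ hμ⟩
  set b := hA.eigenvectorBasis with hb_def
  set lam := hA.eigenvalues with hlam_def
  have hmem : ∀ i : Fin n, lam i ∈ S := by
    intro i
    refine ⟨⇑(b i), ?_, ?_⟩
    · intro h
      have : ‖b i‖ = 1 := b.orthonormal.1 i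
      rw [show b i = 0 from by ext j; simpa using congrFun h j] at this
      simp at this
    · exact hA.mulVec_eigenvectorBasis i
  have hle : ∀ i, lam i ≤ sSup S := fun i => le_csSup hbdd (hmem i)
  set x : EuclideanSpace ℝ (Fin n) := WithLp.toLp 2 (fun _ => (1 : ℝ)) with hx_def
  set c : Fin n → ℝ := fun i => b.repr x i with hc_def
  have hxsum : ∑ i, c i • b i = x := b.sum_repr x
  have hAx : A.mulVec x = ∑ i, (c i * lam i) • ⇑(b i) := by
    calc A.mulVec x = A.mulVec (∑ i, c i • ⇑(b i)) := by
          rw [← hxsum]; simp only [WithLp.ofLp_sum, WithLp.ofLp_smul]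
      _ = ∑ i, c i • A.mulVec ⇑(b i) := by
          simp only [← Matrix.mulVecLin_apply]
          rw [map_sum]
          simp only [map_smul]
      _ = ∑ i, (c i * lam i) • ⇑(b i) := by
          refine Finset.sum_congr rfl fun i _ => ?_
          rw [hA.mulVec_eigenvectorBasis i, smul_smul]
  have key1 : (inner ℝ x (WithLp.toLp 2 (A.mulVec x) : EuclideanSpace ℝ (Fin n)) : ℝ) = ∑ i, c i * (c i * lam i) := by
    conv_lhs => rw [show (WithLp.toLp 2 (A.mulVec x) : EuclideanSpace ℝ (Fin n)) = ∑ i, (c i * lam i) • b i from by rw [hAx]; ext j; simp]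
    conv_lhs => rw [← hxsum]
    simpa using b.orthonormal.inner_sum c (fun i => c i * lam i) univ
  have key2 : (inner ℝ x (WithLp.toLp 2 (A.mulVec x) : EuclideanSpace ℝ (Fin n)) : ℝ) = ∑ i, ∑ j, A i j := by
    rw [PiLp.inner_apply]
    simp only [RCLike.inner_apply, starRingEnd_apply, star_trivial]
    refine Finset.sum_congr rfl fun i _ => ?_
    simp [hx_def, Matrix.mulVec, dotProduct]
  have key3 : ∑ i, c i * c i = (n : ℝ) := by
    have h1 : (inner ℝ x x : ℝ) = ∑ i, c i * c i := by
      conv_lhs => rw [← hxsum]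
      simpa using b.orthonormal.inner_sum c c univ
    have h2 : (inner ℝ x x : ℝ) = (n : ℝ) := by
      rw [PiLp.inner_apply]
      simp [hx_def]
    rw [← h1, h2]
  have main : ∑ i, ∑ j, A i j ≤ sSup S * n := by
    rw [← key2, key1, ← key3, Finset.mul_sum]
    refine Finset.sum_le_sum fun i _ => ?_
    have h1 : c i * (c i * lam i) = lam i * (c i * c i) := by ring
    rw [h1]
    exact mul_le_mul_of_nonneg_right (hle i) (mul_self_nonneg (c i))
  have hnpos : (0:ℝ) < n := by exact_mod_cast hn
  rw [div_le_iff₀ hnpos]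
  exact main

lemma zmod2_ne (a b : ZMod 2) (h : a ≠ b) : a = b + 1 := by revert a b; decide

lemma no_odd_coloring (l : ℕ) (hl : 1 ≤ l) (g : Fin (2*l+1) → ZMod 2)
    (h : ∀ u v : Fin (2*l+1), (cycleGraph (2*l+1)).Adj u v → g u ≠ g v) : False := by
  have adj_succ : ∀ i : ℕ, (hi : i + 1 ≤ 2*l) →
      (cycleGraph (2*l+1)).Adj ⟨i+1, by omega⟩ ⟨i, by omega⟩ := by
    intro i hi
    rw [cycleGraph_adj']
    left
    rw [Fin.sub_def]
    simp only
    show (2*l+1 - i + (i+1)) % (2*l+1) = 1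
    have h1 : 2*l+1 - i + (i+1) = (2*l+1) + 1 := by omega
    rw [h1, Nat.add_mod_left, Nat.mod_eq_of_lt (by omega)]
  have key : ∀ i : ℕ, (hi : i ≤ 2*l) → g ⟨i, by omega⟩ = g ⟨0, by omega⟩ + (i : ZMod 2) := by
    intro i
    induction i with
    | zero => intro _; simp
    | succ k ih =>
      intro hk
      have h1 := h _ _ (adj_succ k hk)
      have h2 := zmod2_ne _ _ h1
      rw [h2, ih (by omega)]
      push_cast
      ring
  have hlast : g ⟨2*l, by omega⟩ = g ⟨0, by omega⟩ := by
    rw [key (2*l) le_rfl]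
    have h0 : ((2*l : ℕ) : ZMod 2) = 0 := by
      rw [Nat.cast_mul]
      have : ((2:ℕ) : ZMod 2) = 0 := by decide
      rw [this, zero_mul]
    rw [h0, add_zero]
  have hadj : (cycleGraph (2*l+1)).Adj ⟨0, by omega⟩ ⟨2*l, by omega⟩ := by
    rw [cycleGraph_adj']
    left
    rw [Fin.sub_def]
    simp only
    show (2*l+1 - 2*l + 0) % (2*l+1) = 1
    have h1 : 2*l+1 - 2*l + 0 = 1 := by omega
    rw [h1, Nat.mod_eq_of_lt (by omega)]
  exact h _ _ hadj hlast.symm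

/-- The candidate extremal-type graph: clique on the first `s` vertices joined to
everything, plus a complete bipartite graph between `[s,c)` and `[c,n)`. -/
def hardG (n s c : ℕ) : SimpleGraph (Fin n) :=
  SimpleGraph.fromRel (fun i j => (i : ℕ) < s ∨ ((i : ℕ) < c ∧ c ≤ (j : ℕ)))

lemma hardG_adj {n s c : ℕ} {i j : Fin n} :
    (hardG n s c).Adj i j ↔ i ≠ j ∧ ((i:ℕ) < s ∨ (j:ℕ) < s ∨
      ((i:ℕ) < c ∧ c ≤ (j:ℕ)) ∨ ((j:ℕ) < c ∧ c ≤ (i:ℕ))) := by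
  simp only [hardG, SimpleGraph.fromRel_adj]
  tauto

lemma hardG_free (n t l s c : ℕ) (ht : 2 ≤ t) (hl : 1 ≤ l) (hs : s = t - 1) :
    ¬ ContainsCopy (copies t (cycleGraph (2*l+1))) (hardG n s c) := by
  rintro ⟨f, finj, fhom⟩
  have key : ∀ k : Fin t, ∃ v : Fin (2*l+1), ((f (k, v)) : ℕ) < s := by
    intro k
    by_contra hcon
    push_neg at hcon
    apply no_odd_coloring l hl (fun v => if ((f (k, v)) : ℕ) < c then 0 else 1)
    intro u v huv
    have hadj : (hardG n s c).Adj (f (k, u)) (f (k, v)) := fhom _ _ ⟨rfl, huv⟩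
    rw [hardG_adj] at hadj
    have h1 := hcon u
    have h2 := hcon v
    rcases hadj.2 with h | h | ⟨h3, h4⟩ | ⟨h3, h4⟩
    · omega
    · omega
    · simp only [ne_eq]
      rw [if_pos h3, if_neg (by omega)]
      decide
    · simp only [ne_eq]
      rw [if_neg (by omega), if_pos h3]
      decide
  choose v hv using key
  have hinj : Function.Injective (fun k : Fin t => (⟨(f (k, v k) : ℕ), hv k⟩ : Fin s)) := by
    intro k1 k2 h
    simp only [Fin.mk.injEq] at h
    have : f (k1, v k1) = f (k2, v k2) := Fin.ext h
    have := finj this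
    exact (Prod.mk.injEq _ _ _ _ ▸ this).1
  have := Fintype.card_le_of_injective _ hinj
  simp [Fintype.card_fin] at this
  omega

open Finset in
lemma count_ico (n a b : ℕ) (hbn : b ≤ n) :
    ∑ i : Fin n, (if a ≤ (i:ℕ) ∧ (i:ℕ) < b then (1:ℝ) else 0) = ((b - a : ℕ) : ℝ) := by
  rw [Fin.sum_univ_eq_sum_range (fun i => if a ≤ i ∧ i < b then (1:ℝ) else 0)]
  rw [Finset.sum_boole]
  congr 1
  rw [show (range n).filter (fun i => a ≤ i ∧ i < b) = Finset.Ico a b by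
    ext x; simp [Finset.mem_Ico, Finset.mem_range]; omega]
  exact Nat.card_Ico a b

open Finset in
lemma count_ge (n c : ℕ) :
    ∑ i : Fin n, (if c ≤ (i:ℕ) then (1:ℝ) else 0) = ((n - c : ℕ) : ℝ) := by
  rw [Fin.sum_univ_eq_sum_range (fun i => if c ≤ i then (1:ℝ) else 0)]
  rw [Finset.sum_boole]
  congr 1
  rw [show (range n).filter (fun i => c ≤ i) = Finset.Ico c n by
    ext x; simp [Finset.mem_Ico, Finset.mem_range]; omega]
  exact Nat.card_Ico c n

open Finset in
lemma count_lt (n s : ℕ) (hsn : s ≤ n) :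
    ∑ i : Fin n, (if (i:ℕ) < s then (1:ℝ) else 0) = (s : ℝ) := by
  rw [Fin.sum_univ_eq_sum_range (fun i => if i < s then (1:ℝ) else 0)]
  rw [Finset.sum_boole]
  congr 1
  rw [show (range n).filter (fun i => i < s) = Finset.Ico 0 s by
    ext x; simp [Finset.mem_Ico, Finset.mem_range]; omega]
  simp

open Finset in
lemma hardG_sum (n s c : ℕ) (hsc : s ≤ c) (hcn : c ≤ n) :
    ∑ i, ∑ j, ((hardG n s c).adjMatrix ℝ) i j =
      (n:ℝ)^2 - (((c - s : ℕ):ℝ)^2 + ((n - c : ℕ):ℝ)^2) - (s:ℝ) := by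
  set e : Fin n → ℝ := fun i => if s ≤ (i:ℕ) ∧ (i:ℕ) < c then 1 else 0 with he
  set o : Fin n → ℝ := fun i => if c ≤ (i:ℕ) then 1 else 0 with ho
  have ptwise : ∀ i j : Fin n, ((hardG n s c).adjMatrix ℝ) i j =
      (1 - (e i * e j + o i * o j)) - (if i = j then (if (i:ℕ) < s then (1:ℝ) else 0) else 0) := by
    intro i j
    rw [SimpleGraph.adjMatrix_apply]
    by_cases hij : i = j
    · subst hij
      rw [if_neg (SimpleGraph.irrefl _), if_pos rfl]
      simp only [he, ho]
      split_ifs <;> norm_num <;> omega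
    · rw [if_neg hij]
      have : (hardG n s c).Adj i j ↔ ((i:ℕ) < s ∨ (j:ℕ) < s ∨
          ((i:ℕ) < c ∧ c ≤ (j:ℕ)) ∨ ((j:ℕ) < c ∧ c ≤ (i:ℕ))) := by
        rw [hardG_adj]; tauto
      rw [this]
      simp only [he, ho]
      split_ifs <;> norm_num <;> omega
  calc ∑ i, ∑ j, ((hardG n s c).adjMatrix ℝ) i j
      = ∑ i, ∑ j, ((1 - (e i * e j + o i * o j)) -
          (if i = j then (if (i:ℕ) < s then (1:ℝ) else 0) else 0)) := by
        exact Finset.sum_congr rfl fun i _ => Finset.sum_congr rfl fun j _ => ptwise i j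
    _ = (n:ℝ)^2 - (((c - s : ℕ):ℝ)^2 + ((n - c : ℕ):ℝ)^2) - (s:ℝ) := by
        simp only [Finset.sum_sub_distrib, Finset.sum_add_distrib]
        have h1 : ∑ _i : Fin n, ∑ _j : Fin n, (1:ℝ) = (n:ℝ)^2 := by
          simp [Finset.sum_const, card_univ]; ring
        have h2 : ∑ i : Fin n, ∑ j : Fin n, e i * e j = (((c - s : ℕ):ℝ))^2 := by
          rw [← Finset.sum_mul_sum]
          rw [show ∑ i : Fin n, e i = ((c - s : ℕ):ℝ) from count_ico n s c hcn]
          ring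
        have h3 : ∑ i : Fin n, ∑ j : Fin n, o i * o j = (((n - c : ℕ):ℝ))^2 := by
          rw [← Finset.sum_mul_sum]
          rw [show ∑ i : Fin n, o i = ((n - c : ℕ):ℝ) from count_ge n c]
          ring
        have h4 : ∑ i : Fin n, ∑ j : Fin n,
            (if i = j then (if (i:ℕ) < s then (1:ℝ) else 0) else 0) = (s:ℝ) := by
          have : ∀ i : Fin n, ∑ j : Fin n,
              (if i = j then (if (i:ℕ) < s then (1:ℝ) else 0) else 0)
              = (if (i:ℕ) < s then (1:ℝ) else 0) := by
            intro i
            rw [Finset.sum_ite_eq]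
            simp
          rw [Finset.sum_congr rfl fun i _ => this i]
          exact count_lt n s (le_trans hsc hcn)
        rw [h2, h3, h4]
        rw [show ∑ i : Fin n, ∑ j : Fin n, (1:ℝ) = (n:ℝ)^2 from h1]

-- ===================== end auxiliary lemmas =====================

theorem spectral_radius_lower_bound_extremal (t l : ℕ) (ht : 2 ≤ t) (hl : 1 ≤ l) :
    ∃ n₀ : ℕ, ∀ n : ℕ, n₀ ≤ n →
      ∀ G : SimpleGraph (Fin n), ¬ ContainsCopy (copies t (cycleGraph (2*l+1))) G →
        specRad G = spex n (copies t (cycleGraph (2*l+1))) →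
        (n : ℝ)/2 + ((t : ℝ) - 1) - (t : ℝ)^2/(2*n) ≤ specRad G := by
  refine ⟨t + 1, fun n hn G _ hGspex => ?_⟩
  set s := t - 1 with hs_def
  set c := s + (n - s + 1) / 2 with hc_def
  have hsn : s + 2 ≤ n := by omega
  have hsc : s ≤ c := by omega
  have hcn : c ≤ n := by omega
  have hnpos : (0:ℝ) < n := by
    have : 0 < n := by omega
    exact_mod_cast this
  -- the candidate graph
  have hfree : ¬ ContainsCopy (copies t (cycleGraph (2*l+1))) (hardG n s c) :=
    hardG_free n t l s c ht hl rfl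
  -- spex is at least specRad of the candidate
  have hspex_ge : specRad (hardG n s c) ≤ spex n (copies t (cycleGraph (2*l+1))) := by
    apply le_csSup
    · exact ⟨(n:ℝ), by rintro r ⟨G', -, rfl⟩; exact specRad_le_card G'⟩
    · exact ⟨hardG n s c, hfree, rfl⟩
  -- lower bound on specRad of candidate via Rayleigh with all-ones vector
  have hray := rayleigh_ones (show 0 < n by omega) (hardG n s c)
  rw [hardG_sum n s c hsc hcn] at hray
  -- arithmetic
  set a := c - s with ha_def
  set b := n - c with hb_def
  have hfacts : a + b = n - s ∧ b ≤ a ∧ a ≤ b + 1 := by omega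
  have habR : (a:ℝ) + (b:ℝ) = (n:ℝ) - (s:ℝ) := by
    have h1 : ((a + b : ℕ) : ℝ) = ((n - s : ℕ) : ℝ) := by rw [hfacts.1]
    push_cast [Nat.cast_sub (by omega : s ≤ n)] at h1
    linarith
  have hbaR : (b:ℝ) ≤ (a:ℝ) := by exact_mod_cast hfacts.2.1
  have hab1R : (a:ℝ) ≤ (b:ℝ) + 1 := by exact_mod_cast hfacts.2.2
  have htsR : (t:ℝ) = (s:ℝ) + 1 := by
    have : s + 1 = t := by omega
    exact_mod_cast this.symm
  have hsq : ((a:ℝ) - (b:ℝ))^2 ≤ 1 := by nlinarith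
  have harith : (n : ℝ)/2 + ((t : ℝ) - 1) - (t : ℝ)^2/(2*n) ≤
      ((n:ℝ)^2 - ((a:ℝ)^2 + (b:ℝ)^2) - (s:ℝ)) / n := by
    have hL : (n : ℝ)/2 + ((t : ℝ) - 1) - (t : ℝ)^2/(2*n) =
        ((n:ℝ)^2/2 + ((t:ℝ) - 1)*(n:ℝ) - (t:ℝ)^2/2) / n := by
      field_simp
    rw [hL, div_le_div_iff_of_pos_right hnpos]  -- may need name fix
    nlinarith [hsq, habR, htsR, sq_nonneg ((a:ℝ) + (b:ℝ))]
  rw [hGspex]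
  calc (n : ℝ)/2 + ((t : ℝ) - 1) - (t : ℝ)^2/(2*n)
      ≤ ((n:ℝ)^2 - ((a:ℝ)^2 + (b:ℝ)^2) - (s:ℝ)) / n := harith
    _ ≤ specRad (hardG n s c) := hray
    _ ≤ spex n (copies t (cycleGraph (2*l+1))) := hspex_ge
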